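/- arXiv:math/0608457 — 5 statements merged into one kernel-verified Lean document; each statement's English description precedes it below -/
import Mathlib

section
/- Let R be a commutative ring and let β = (i_1, …, i_w) be a positive braid word on q strands with labels b_1, …, b_w ∈ R and underlying permutation π. For 0 ≤ k ≤ w set π_k = τ_{i_k} ∘ ⋯ ∘ τ_{i_1} (so π_0 = id and π_w = π), and let A_k = I_q + b_k·e_{π_{k−1}^{-1}(i_k), π_{k−1}^{-1}(i_k+1)}, where e_{r,s} denotes the q×q matrix whose only nonzero entry is a 1 in position (r,s). Then B_β(b_1, …, b_w) = A_1 A_2 ⋯ A_w P_π. -/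
/-- `Ematrix q R i b` is the `q×q` matrix over `R` agreeing with the identity except
that its `2×2` submatrix in (1-based) rows and columns `i, i+1` is `[[b, 1], [1, 0]]`. -/
def Ematrix (q : ℕ) (R : Type*) [CommRing R] (i : ℕ) (b : R) :
    Matrix (Fin q) (Fin q) R :=
  Matrix.of fun r s =>
    if (r : ℕ) + 1 = i ∧ (s : ℕ) + 1 = i then b
    else if (r : ℕ) + 1 = i ∧ (s : ℕ) + 1 = i + 1 then 1
    else if (r : ℕ) + 1 = i + 1 ∧ (s : ℕ) + 1 = i then 1
    else if (r : ℕ) + 1 = i + 1 ∧ (s : ℕ) + 1 = i + 1 then 0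
    else if r = s then 1 else 0

/-- A positive braid word on `q` strands: a sequence of generator indices `i_k`
with `1 ≤ i_k ≤ q - 1`. -/
def IsBraidWord (q : ℕ) {w : ℕ} (β : Fin w → ℕ) : Prop :=
  ∀ k, 1 ≤ β k ∧ β k + 1 ≤ q

/-- The path matrix `B_β(b₁, …, b_w) = E_{i₁}(b₁) ⋯ E_{i_w}(b_w)`. -/
def pathMatrix (q : ℕ) (R : Type*) [CommRing R] {w : ℕ}
    (β : Fin w → ℕ) (b : Fin w → R) : Matrix (Fin q) (Fin q) R :=
  (List.ofFn fun k : Fin w => Ematrix q R (β k) (b k)).prod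

/-- The underlying permutation `π = τ_{i_w} ∘ ⋯ ∘ τ_{i_1}` of a braid word. -/
def braidPerm {w : ℕ} (β : Fin w → ℕ) : Equiv.Perm ℕ :=
  ((List.ofFn fun k : Fin w => Equiv.swap (β k) (β k + 1)).reverse).prod

/-- The permutation matrix `P_σ = [δ_{σ(i),j}]` (1-based indices). -/
def permMatrix (q : ℕ) (R : Type*) [CommRing R] (σ : Equiv.Perm ℕ) :
    Matrix (Fin q) (Fin q) R :=
  Matrix.of fun r s => if σ ((r : ℕ) + 1) = (s : ℕ) + 1 then 1 else 0

/-- The `(i,j)` entry of a `q×q` matrix, with 1-based indices `1 ≤ i, j ≤ q`. -/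
def entry1 {q : ℕ} {R : Type*} [Zero R] (M : Matrix (Fin q) (Fin q) R) (i j : ℕ) : R :=
  if h : i - 1 < q ∧ j - 1 < q then M ⟨i - 1, h.1⟩ ⟨j - 1, h.2⟩ else 0

/-- The upper-left `n×n` submatrix of a `q×q` matrix. -/
def principalMinor {q : ℕ} {R : Type*} [Zero R]
    (M : Matrix (Fin q) (Fin q) R) (n : ℕ) : Matrix (Fin n) (Fin n) R :=
  Matrix.of fun i j => entry1 M ((i : ℕ) + 1) ((j : ℕ) + 1)

/-- `e_{r,s}` scaled by `b`: the `q×q` matrix whose only possibly nonzero entry is `b`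
in (1-based) position `(r, s)`. -/
def stdE (q : ℕ) (R : Type*) [CommRing R] (r s : ℕ) (b : R) :
    Matrix (Fin q) (Fin q) R :=
  Matrix.of fun x y => if (x : ℕ) + 1 = r ∧ (y : ℕ) + 1 = s then b else 0

-- AUX START
/-- `σ` and `σ⁻¹` preserve the window `[1, q]`. -/
def BraidAux.Pres (q : ℕ) (σ : Equiv.Perm ℕ) : Prop :=
  ∀ x, 1 ≤ x → x ≤ q → (1 ≤ σ x ∧ σ x ≤ q) ∧ (1 ≤ σ⁻¹ x ∧ σ⁻¹ x ≤ q)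

namespace BraidAux

lemma pres_one (q : ℕ) : Pres q 1 := by
  intro x h1 h2; simp [h1, h2]

lemma pres_mul {q : ℕ} {σ ρ : Equiv.Perm ℕ} (hσ : Pres q σ) (hρ : Pres q ρ) :
    Pres q (σ * ρ) := by
  intro x h1 h2
  have h := hρ x h1 h2
  have h' := hσ (ρ x) h.1.1 h.1.2
  have hi := hσ x h1 h2
  have hi' := hρ (σ⁻¹ x) hi.2.1 hi.2.2
  refine ⟨h'.1, ?_⟩
  rw [mul_inv_rev]
  exact hi'.2

lemma pres_swap {q i : ℕ} (h1 : 1 ≤ i) (h2 : i + 1 ≤ q) :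
    Pres q (Equiv.swap i (i + 1)) := by
  have hinv : (Equiv.swap i (i + 1))⁻¹ = Equiv.swap i (i + 1) := Equiv.swap_inv i (i + 1)
  have key : ∀ x, 1 ≤ x → x ≤ q → 1 ≤ Equiv.swap i (i + 1) x ∧ Equiv.swap i (i + 1) x ≤ q := by
    intro x hx1 hx2
    rw [Equiv.swap_apply_def]
    split_ifs <;> omega
  intro x hx1 hx2
  rw [hinv]
  exact ⟨key x hx1 hx2, key x hx1 hx2⟩

lemma pres_list {q : ℕ} (L : List (Equiv.Perm ℕ)) (h : ∀ σ ∈ L, Pres q σ) :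
    Pres q L.prod :=
  List.prod_induction _ (fun _ _ => pres_mul) (pres_one q) h

/-- prefix permutations of a braid word -/
def braidPi {w : ℕ} (β : Fin w → ℕ) (k : ℕ) : Equiv.Perm ℕ :=
  (((List.ofFn fun j : Fin w => Equiv.swap (β j) (β j + 1)).take k).reverse).prod

lemma pres_braidPi {q w : ℕ} {β : Fin w → ℕ} (hβ : IsBraidWord q β) (k : ℕ) :
    Pres q (braidPi β k) := by
  apply pres_list
  intro σ hσ
  rw [List.mem_reverse] at hσ
  have hσ' := List.take_subset _ _ hσ
  rw [List.mem_ofFn] at hσ'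
  obtain ⟨j, rfl⟩ := hσ'
  exact pres_swap (hβ j).1 (hβ j).2

variable {q : ℕ} {R : Type*} [CommRing R]

lemma permMatrix_apply (σ : Equiv.Perm ℕ) (x y : Fin q) :
    permMatrix q R σ x y = if σ ((x : ℕ) + 1) = (y : ℕ) + 1 then 1 else 0 := rfl

lemma stdE_apply (r s : ℕ) (b : R) (x y : Fin q) :
    stdE q R r s b x y = if (x : ℕ) + 1 = r ∧ (y : ℕ) + 1 = s then b else 0 := rfl

lemma permMatrix_one : permMatrix q R 1 = 1 := by
  ext x y
  rw [permMatrix_apply, Matrix.one_apply]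
  simp [Fin.ext_iff]

lemma permMatrix_mul_apply (σ : Equiv.Perm ℕ) (hσ : Pres q σ)
    (M : Matrix (Fin q) (Fin q) R) (x y : Fin q) (hx : σ ((x : ℕ) + 1) - 1 < q) :
    (permMatrix q R σ * M) x y = M ⟨σ ((x : ℕ) + 1) - 1, hx⟩ y := by
  have hb := (hσ ((x : ℕ) + 1) (by omega) (by omega)).1
  rw [Matrix.mul_apply]
  rw [Finset.sum_eq_single (⟨σ ((x : ℕ) + 1) - 1, hx⟩ : Fin q)]
  · rw [permMatrix_apply, if_pos (by simp; omega), one_mul]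
  · intro t ht hne
    rw [permMatrix_apply, if_neg, zero_mul]
    intro hc
    apply hne
    apply Fin.ext
    simp
    omega
  · intro hc
    exact absurd (Finset.mem_univ _) hc

lemma stdE_mul_apply (r s : ℕ) (hs1 : 1 ≤ s) (hs2 : s ≤ q) (b : R)
    (M : Matrix (Fin q) (Fin q) R) (x y : Fin q) :
    (stdE q R r s b * M) x y =
      if (x : ℕ) + 1 = r then b * M ⟨s - 1, by omega⟩ y else 0 := by
  rw [Matrix.mul_apply]
  rw [Finset.sum_eq_single (⟨s - 1, by omega⟩ : Fin q)]
  · rw [stdE_apply]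
    simp only [show ((⟨s - 1, by omega⟩ : Fin q) : ℕ) + 1 = s by simp; omega]
    split_ifs with h1 h2 h3 <;> simp_all
  · intro t ht hne
    rw [stdE_apply, if_neg, zero_mul]
    rintro ⟨hc1, hc2⟩
    apply hne
    apply Fin.ext
    simp
    omega
  · intro hc
    exact absurd (Finset.mem_univ _) hc

lemma permMatrix_mul_permMatrix (σ ρ : Equiv.Perm ℕ) (hσ : Pres q σ) :
    permMatrix q R σ * permMatrix q R ρ = permMatrix q R (ρ * σ) := by
  ext x y
  have hb := (hσ ((x : ℕ) + 1) (by omega) (by omega)).1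
  rw [permMatrix_mul_apply σ hσ _ x y (by omega)]
  rw [permMatrix_apply, permMatrix_apply]
  have : (σ ((x : ℕ) + 1) - 1) + 1 = σ ((x : ℕ) + 1) := by omega
  rw [show ((⟨σ ((x : ℕ) + 1) - 1, by omega⟩ : Fin q) : ℕ) + 1 = σ ((x : ℕ) + 1) from this]
  rw [Equiv.Perm.mul_apply]

lemma permMatrix_mul_one_add_stdE (σ : Equiv.Perm ℕ) (hσ : Pres q σ)
    {r s : ℕ} (hr1 : 1 ≤ r) (hr2 : r ≤ q) (hs1 : 1 ≤ s) (hs2 : s ≤ q) (b : R) :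
    permMatrix q R σ * (1 + stdE q R r s b) =
      (1 + stdE q R (σ⁻¹ r) (σ⁻¹ s) b) * permMatrix q R σ := by
  rw [mul_add, add_mul, mul_one, one_mul]
  congr 1
  ext x y
  have hb := (hσ ((x : ℕ) + 1) (by omega) (by omega)).1
  have hsi := (hσ s hs1 hs2).2
  have hri := (hσ r hr1 hr2).2
  rw [permMatrix_mul_apply σ hσ _ x y (by omega)]
  rw [stdE_mul_apply (σ⁻¹ r) (σ⁻¹ s) hsi.1 hsi.2 b _ x y]
  rw [stdE_apply, permMatrix_apply]
  have h1 : ((⟨σ ((x : ℕ) + 1) - 1, by omega⟩ : Fin q) : ℕ) + 1 = σ ((x : ℕ) + 1) := by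
    simp; omega
  rw [h1]
  have h2 : ((⟨σ⁻¹ s - 1, (by omega : σ⁻¹ s - 1 < q)⟩ : Fin q) : ℕ) + 1 = σ⁻¹ s := Nat.sub_add_cancel hsi.1
  rw [h2]
  have h3 : σ (σ⁻¹ s) = s := Equiv.apply_symm_apply σ s
  rw [h3]
  have h4 : σ ((x : ℕ) + 1) = r ↔ (x : ℕ) + 1 = σ⁻¹ r := by
    constructor
    · intro h; rw [← h]; exact (Equiv.symm_apply_apply σ _).symm
    · intro h; rw [h]; exact Equiv.apply_symm_apply σ r
  by_cases hc1 : (x : ℕ) + 1 = σ⁻¹ r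
  · rw [if_pos hc1]
    by_cases hc2 : (y : ℕ) + 1 = s
    · rw [if_pos ⟨h4.mpr hc1, hc2⟩, if_pos hc2.symm, mul_one]
    · rw [if_neg (by tauto), if_neg (fun h => hc2 h.symm), mul_zero]
  · rw [if_neg hc1, if_neg (by rw [h4]; tauto)]

lemma Ematrix_eq {i : ℕ} (hi1 : 1 ≤ i) (hi2 : i + 1 ≤ q) (b : R) :
    Ematrix q R i b =
      (1 + stdE q R i (i + 1) b) * permMatrix q R (Equiv.swap i (i + 1)) := by
  rw [add_mul, one_mul]
  ext x y
  rw [Matrix.add_apply]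
  rw [stdE_mul_apply i (i + 1) (by omega) hi2 b _ x y]
  rw [permMatrix_apply, permMatrix_apply]
  have h1 : ((⟨i + 1 - 1, by omega⟩ : Fin q) : ℕ) + 1 = i + 1 := by simp
  rw [h1]
  have hswap : ∀ z : ℕ, Equiv.swap i (i + 1) z = if z = i then i + 1 else if z = i + 1 then i else z := by
    intro z; rw [Equiv.swap_apply_def]
  rw [hswap, hswap]
  show Ematrix q R i b x y = _
  unfold Ematrix
  rw [Matrix.of_apply]
  simp only [Fin.ext_iff]
  have hxy : (x : ℕ) < q := x.isLt
  have hxy' : (y : ℕ) < q := y.isLt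
  split_ifs <;> first | rfl | omega | ring | (simp_all; omega) | simp_all

end BraidAux

namespace BraidAux

lemma aux_main (q : ℕ) (R : Type*) [CommRing R] :
    ∀ (w : ℕ) (β : Fin w → ℕ), IsBraidWord q β → ∀ (b : Fin w → R),
    pathMatrix q R β b =
      (List.ofFn fun k : Fin w =>
        (1 : Matrix (Fin q) (Fin q) R) +
          stdE q R ((braidPi β (k : ℕ))⁻¹ (β k)) ((braidPi β (k : ℕ))⁻¹ (β k + 1)) (b k)).prod *
        permMatrix q R (braidPi β w) := by
  intro w
  induction w with
  | zero =>
    intro β hβ b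
    simp [pathMatrix, braidPi, permMatrix_one]
  | succ w ih =>
    intro β hβ b
    have hβ' : IsBraidWord q (fun k : Fin w => β k.castSucc) := fun k => hβ k.castSucc
    set i : ℕ := β (Fin.last w) with hi
    set x : R := b (Fin.last w) with hx
    have hL : (List.ofFn fun j : Fin (w + 1) => Equiv.swap (β j) (β j + 1)) =
        (List.ofFn fun j : Fin w => Equiv.swap (β j.castSucc) (β j.castSucc + 1)) ++
          [Equiv.swap i (i + 1)] := by
      rw [List.ofFn_succ', List.concat_eq_append]
    have hpi_le : ∀ k : ℕ, k ≤ w → braidPi β k = braidPi (fun j : Fin w => β j.castSucc) k := by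
      intro k hk
      unfold braidPi
      rw [hL, List.take_append_of_le_length (by simpa using hk)]
    have hpi_top : braidPi β (w + 1) = Equiv.swap i (i + 1) * braidPi (fun j : Fin w => β j.castSucc) w := by
      unfold braidPi
      rw [hL, List.take_of_length_le (by simp), List.reverse_append,
        List.take_of_length_le (by simp)]
      simp
    have hpm : pathMatrix q R β b =
        pathMatrix q R (fun k : Fin w => β k.castSucc) (fun k : Fin w => b k.castSucc) *
          Ematrix q R i x := by
      unfold pathMatrix
      rw [List.ofFn_succ', List.concat_eq_append, List.prod_append, List.prod_cons,
        List.prod_nil, mul_one]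
    have hpres : Pres q (braidPi (fun j : Fin w => β j.castSucc) w) := pres_braidPi hβ' w
    have hii := hβ (Fin.last w)
    have hri := (hpres i hii.1 (by omega)).2
    have hsi := (hpres (i + 1) (by omega) hii.2).2
    have hAlist : (List.ofFn fun k : Fin (w + 1) =>
          (1 : Matrix (Fin q) (Fin q) R) +
            stdE q R ((braidPi β (k : ℕ))⁻¹ (β k)) ((braidPi β (k : ℕ))⁻¹ (β k + 1)) (b k)) =
        (List.ofFn fun k : Fin w =>
          (1 : Matrix (Fin q) (Fin q) R) +
            stdE q R ((braidPi (fun j : Fin w => β j.castSucc) (k : ℕ))⁻¹ (β k.castSucc))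
              ((braidPi (fun j : Fin w => β j.castSucc) (k : ℕ))⁻¹ (β k.castSucc + 1))
              (b k.castSucc)) ++
          [(1 : Matrix (Fin q) (Fin q) R) +
            stdE q R ((braidPi (fun j : Fin w => β j.castSucc) w)⁻¹ i)
              ((braidPi (fun j : Fin w => β j.castSucc) w)⁻¹ (i + 1)) x] := by
      rw [List.ofFn_succ', List.concat_eq_append]
      congr 1
      · congr 1
        funext k
        rw [hpi_le (k.castSucc : ℕ) (Nat.lt_succ_iff.mp k.castSucc.isLt), Fin.coe_castSucc]
      · rw [show ((Fin.last w : Fin (w+1)) : ℕ) = w from rfl, hpi_le w le_rfl]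
    rw [hpm, ih _ hβ' (fun k : Fin w => b k.castSucc), hAlist, List.prod_append,
      List.prod_cons, List.prod_nil, mul_one]
    rw [Ematrix_eq hii.1 hii.2 x]
    rw [mul_assoc, ← mul_assoc (permMatrix q R _), 
      permMatrix_mul_one_add_stdE _ hpres hii.1 (by omega) (by omega) hii.2 x]
    rw [mul_assoc, permMatrix_mul_permMatrix _ _ hpres, ← hpi_top, ← mul_assoc]

end BraidAux

/-- `B_β(b₁, …, b_w) = A₁ A₂ ⋯ A_w P_π`, where
`A_k = I_q + b_k · e_{π_{k−1}⁻¹(i_k), π_{k−1}⁻¹(i_k+1)}` and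
`π_k = τ_{i_k} ∘ ⋯ ∘ τ_{i_1}`. -/
theorem pathMatrix_eq_prod_A_mul_permMatrix (q : ℕ) (R : Type*) [CommRing R] {w : ℕ}
    (β : Fin w → ℕ) (hβ : IsBraidWord q β) (b : Fin w → R)
    (πp : ℕ → Equiv.Perm ℕ)
    (hπp : ∀ k : ℕ, πp k =
      (((List.ofFn fun j : Fin w => Equiv.swap (β j) (β j + 1)).take k).reverse).prod)
    (A : Fin w → Matrix (Fin q) (Fin q) R)
    (hA : ∀ k : Fin w, A k =
      1 + stdE q R ((πp (k : ℕ))⁻¹ (β k)) ((πp (k : ℕ))⁻¹ (β k + 1)) (b k)) :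
    pathMatrix q R β b = (List.ofFn A).prod * permMatrix q R (πp w) := by
  have hπ : ∀ k : ℕ, πp k = BraidAux.braidPi β k := hπp
  have hA' : A = fun k : Fin w =>
      (1 : Matrix (Fin q) (Fin q) R) +
        stdE q R ((BraidAux.braidPi β (k : ℕ))⁻¹ (β k))
          ((BraidAux.braidPi β (k : ℕ))⁻¹ (β k + 1)) (b k) := by
    funext k
    rw [hA k, hπ (k : ℕ)]
  rw [hA', hπ w]
  exact BraidAux.aux_main q R w β hβ b
end

section
/- Let β = (i_1, …, i_w) be a positive braid word on q strands with underlying permutation π and partial permutations π_k = τ_{i_k} ∘ ⋯ ∘ τ_{i_1} (π_0 = id). Assume β is a permutation braid word, i.e. the unordered pairs {π_{k−1}^{-1}(i_k), π_{k−1}^{-1}(i_k+1)} for k = 1, …, w are pairwise distinct (every pair of strands crosses at most once). Then for any commutative ring R and any labels b_1, …, b_w ∈ R, the path matrix B = B_β(b_1, …, b_w) satisfies B_{i,π(i)} = 1 for every i, and B_{i,j} = 0 whenever j > π(i) or i > π^{-1}(j). -/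
section Aux

variable {q : ℕ} {R : Type*} [CommRing R]

private lemma entry1_eq (M : Matrix (Fin q) (Fin q) R) {i j : ℕ} (hi : i - 1 < q)
    (hj : j - 1 < q) : entry1 M i j = M ⟨i-1, hi⟩ ⟨j-1, hj⟩ := by
  rw [entry1, dif_pos ⟨hi, hj⟩]

private lemma entry1_one {i j : ℕ} (hi1 : 1 ≤ i) (hi : i ≤ q) (hj1 : 1 ≤ j) (hj : j ≤ q) :
    entry1 (1 : Matrix (Fin q) (Fin q) R) i j = if i = j then 1 else 0 := by
  rw [entry1_eq _ (by omega) (by omega), Matrix.one_apply]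
  by_cases h : i = j
  · rw [if_pos h, if_pos (by simp [Fin.ext_iff]; omega)]
  · rw [if_neg h, if_neg (by simp [Fin.ext_iff]; omega)]

private lemma entry1_mul_E (M : Matrix (Fin q) (Fin q) R) (t : ℕ) (ht1 : 1 ≤ t)
    (ht2 : t + 1 ≤ q) (c : R) (i j : ℕ) (hi1 : 1 ≤ i) (hi2 : i ≤ q) (hj1 : 1 ≤ j)
    (hj2 : j ≤ q) :
    entry1 (M * Ematrix q R t c) i j =
      if j = t then entry1 M i (t+1) + entry1 M i t * c
      else if j = t+1 then entry1 M i t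
      else entry1 M i j := by
  have hiq : i - 1 < q := by omega
  have hjq : j - 1 < q := by omega
  have htq : t - 1 < q := by omega
  have htq' : t + 1 - 1 < q := by omega
  rw [entry1_eq _ hiq hjq, Matrix.mul_apply]
  set r : Fin q := ⟨i-1, hiq⟩
  set s : Fin q := ⟨j-1, hjq⟩
  have hs : (s : ℕ) + 1 = j := by simp [s]; omega
  by_cases h1 : j = t
  · rw [if_pos h1, entry1_eq _ hiq htq', entry1_eq _ hiq htq]
    have hcol : ∀ x : Fin q, Ematrix q R t c x s =
        (if x = (⟨t-1, htq⟩ : Fin q) then c else 0) +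
        (if x = (⟨t+1-1, htq'⟩ : Fin q) then 1 else 0) := by
      intro x
      simp only [Ematrix, Matrix.of_apply, hs, h1, Fin.ext_iff, and_true]
      split_ifs <;> first | omega | ring1
    simp only [hcol, mul_add, mul_ite, mul_zero, mul_one, Finset.sum_add_distrib,
      Finset.sum_ite_eq', Finset.mem_univ, if_pos]
    ring
  · rw [if_neg h1]
    by_cases h2 : j = t + 1
    · rw [if_pos h2, entry1_eq _ hiq htq]
      have hcol : ∀ x : Fin q, Ematrix q R t c x s =
          (if x = (⟨t-1, htq⟩ : Fin q) then 1 else 0) := by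
        intro x
        simp only [Ematrix, Matrix.of_apply, hs, h2, Fin.ext_iff, and_true]
        split_ifs <;> first | omega | ring1
      simp only [hcol, mul_ite, mul_zero, mul_one, Finset.sum_ite_eq', Finset.mem_univ, if_pos]
      rfl
    · rw [if_neg h2, entry1_eq _ hiq hjq]
      have hcol : ∀ x : Fin q, Ematrix q R t c x s = (if x = s then 1 else 0) := by
        intro x
        simp only [Ematrix, Matrix.of_apply, hs, Fin.ext_iff]
        split_ifs <;> first | omega | ring1
      simp only [hcol, mul_ite, mul_zero, mul_one, Finset.sum_ite_eq', Finset.mem_univ, if_pos]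
      rfl

private lemma prod_fix (l : List (Equiv.Perm ℕ)) (x : ℕ) (h : ∀ σ ∈ l, σ x = x) :
    l.prod x = x := by
  induction l with
  | nil => simp
  | cons a l ih =>
    rw [List.prod_cons, Equiv.Perm.mul_apply,
      ih (fun σ hσ => h σ (List.mem_cons_of_mem a hσ)), h a List.mem_cons_self]

private lemma ofFn_take_succ {α : Type*} {w : ℕ} (f : Fin w → α) {k : ℕ} (hk : k < w) :
    (List.ofFn f).take (k+1) = (List.ofFn f).take k ++ [f ⟨k, hk⟩] := by
  rw [List.take_succ]
  simp [List.getElem?_ofFn, hk]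

end Aux

/-- for a permutation braid word (every pair of strands crosses at most
once), the path matrix has `B_{i,π(i)} = 1`, and `B_{i,j} = 0` whenever `j > π(i)` or
`i > π⁻¹(j)`. -/
theorem pathMatrix_permutation_braid (q : ℕ) (R : Type*) [CommRing R] {w : ℕ}
    (β : Fin w → ℕ) (hβ : IsBraidWord q β) (b : Fin w → R)
    (πp : ℕ → Equiv.Perm ℕ)
    (hπp : ∀ k : ℕ, πp k =
      (((List.ofFn fun j : Fin w => Equiv.swap (β j) (β j + 1)).take k).reverse).prod)
    (hperm : ∀ k l : Fin w, k ≠ l →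
      ({(πp (k : ℕ))⁻¹ (β k), (πp (k : ℕ))⁻¹ (β k + 1)} : Finset ℕ) ≠
      ({(πp (l : ℕ))⁻¹ (β l), (πp (l : ℕ))⁻¹ (β l + 1)} : Finset ℕ)) :
    (∀ i : ℕ, 1 ≤ i → i ≤ q →
      entry1 (pathMatrix q R β b) i (πp w i) = 1) ∧
    (∀ i j : ℕ, 1 ≤ i → i ≤ q → 1 ≤ j → j ≤ q →
      (πp w i < j ∨ (πp w)⁻¹ j < i) → entry1 (pathMatrix q R β b) i j = 0) := by
  -- basic facts about the partial permutations
  have hfix : ∀ k x : ℕ, x < 1 ∨ q < x → πp k x = x := by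
    intro k x hx
    rw [hπp k]
    apply prod_fix
    intro σ hσ
    rw [List.mem_reverse] at hσ
    have hσ' : σ ∈ List.ofFn fun j : Fin w => Equiv.swap (β j) (β j + 1) :=
      List.take_subset _ _ hσ
    rw [List.mem_ofFn] at hσ'
    obtain ⟨j, rfl⟩ := hσ'
    exact Equiv.swap_apply_of_ne_of_ne (by have := hβ j; omega) (by have := hβ j; omega)
  have hfixinv : ∀ k x : ℕ, x < 1 ∨ q < x → (πp k)⁻¹ x = x := by
    intro k x hx
    conv_lhs => rw [← hfix k x hx]
    exact (πp k).symm_apply_apply _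
  have hrange : ∀ k x : ℕ, 1 ≤ x → x ≤ q → 1 ≤ πp k x ∧ πp k x ≤ q := by
    intro k x h1 h2
    have key : ¬(πp k x < 1 ∨ q < πp k x) := by
      intro h
      have h2' := hfixinv k (πp k x) h
      rw [show (πp k)⁻¹ (πp k x) = x from (πp k).symm_apply_apply x] at h2'
      omega
    omega
  have hrangeinv : ∀ k x : ℕ, 1 ≤ x → x ≤ q → 1 ≤ (πp k)⁻¹ x ∧ (πp k)⁻¹ x ≤ q := by
    intro k x h1 h2
    have key : ¬((πp k)⁻¹ x < 1 ∨ q < (πp k)⁻¹ x) := by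
      intro h
      have h2' := hfix k ((πp k)⁻¹ x) h
      rw [show πp k ((πp k)⁻¹ x) = x from (πp k).apply_symm_apply x] at h2'
      omega
    omega
  have hπ0 : πp 0 = 1 := by rw [hπp 0]; simp
  have hstepπ : ∀ (k : ℕ) (hk : k < w),
      πp (k+1) = Equiv.swap (β ⟨k, hk⟩) (β ⟨k, hk⟩ + 1) * πp k := by
    intro k hk
    rw [hπp (k+1), hπp k, ofFn_take_succ _ hk, List.reverse_append]
    simp
  -- non-crossing lemma
  have nocross : ∀ k : ℕ, k ≤ w → ∀ a c : ℕ, a < c →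
      (∀ j : Fin w, (j : ℕ) < k →
        ({(πp (j : ℕ))⁻¹ (β j), (πp (j : ℕ))⁻¹ (β j + 1)} : Finset ℕ) ≠ ({a, c} : Finset ℕ)) →
      πp k a < πp k c := by
    intro k
    induction k with
    | zero => intro _ a c hac _; rw [hπ0]; simpa using hac
    | succ k ih =>
      intro hk a c hac hnc
      have hkw : k < w := hk
      have ih' := ih (le_of_lt hkw) a c hac (fun j hj => hnc j (by omega))
      set t := β ⟨k, hkw⟩ with ht
      rw [hstepπ k hkw, Equiv.Perm.mul_apply, Equiv.Perm.mul_apply]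
      have hno : ¬(πp k a = t ∧ πp k c = t + 1) := by
        rintro ⟨h1, h2⟩
        apply hnc ⟨k, hkw⟩ (Nat.lt_succ_self k)
        have e1 : (πp k)⁻¹ t = a := by rw [← h1]; exact (πp k).symm_apply_apply a
        have e2 : (πp k)⁻¹ (t + 1) = c := by rw [← h2]; exact (πp k).symm_apply_apply c
        rw [e1, e2]
      rw [Equiv.swap_apply_def, Equiv.swap_apply_def]
      split_ifs <;> omega
  -- the matrices
  set L : List (Matrix (Fin q) (Fin q) R) :=
    List.ofFn fun k : Fin w => Ematrix q R (β k) (b k) with hL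
  have hstepB : ∀ (k : ℕ) (hk : k < w),
      (L.take (k+1)).prod = (L.take k).prod * Ematrix q R (β ⟨k, hk⟩) (b ⟨k, hk⟩) := by
    intro k hk
    rw [hL, ofFn_take_succ _ hk, List.prod_append, List.prod_singleton]
  -- main invariant
  have inv : ∀ k : ℕ, k ≤ w →
      (∀ i : ℕ, 1 ≤ i → i ≤ q → entry1 (L.take k).prod i (πp k i) = 1) ∧
      (∀ i j : ℕ, 1 ≤ i → i ≤ q → 1 ≤ j → j ≤ q →
        (πp k i < j ∨ (πp k)⁻¹ j < i) → entry1 (L.take k).prod i j = 0) := by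
    intro k
    induction k with
    | zero =>
      intro _
      rw [hπ0]
      simp only [List.take_zero, List.prod_nil, Equiv.Perm.one_apply, inv_one]
      constructor
      · intro i h1 h2
        rw [entry1_one h1 h2 h1 h2, if_pos rfl]
      · intro i j h1 h2 h3 h4 hlt
        rw [entry1_one h1 h2 h3 h4, if_neg (by simp at hlt ⊢; omega)]
    | succ k ih =>
      intro hk
      have hkw : k < w := hk
      obtain ⟨ih1, ih2⟩ := ih (le_of_lt hkw)
      set jk : Fin w := ⟨k, hkw⟩ with hjk
      set t := β jk with ht
      have ht1 : 1 ≤ t := (hβ jk).1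
      have ht2 : t + 1 ≤ q := (hβ jk).2
      set a := (πp k)⁻¹ t with ha
      set c := (πp k)⁻¹ (t+1) with hc
      have hπa : πp k a = t := (πp k).apply_symm_apply _
      have hπc : πp k c = t + 1 := (πp k).apply_symm_apply _
      have hab : 1 ≤ a ∧ a ≤ q := hrangeinv k t ht1 (by omega)
      have hcb : 1 ≤ c ∧ c ≤ q := hrangeinv k (t+1) (by omega) (by omega)
      -- a < c, using the permutation-braid hypothesis
      have hac : a < c := by
        have hne : a ≠ c := by
          intro h
          rw [h, hπc] at hπa
          omega
        by_contra hcon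
        have hca : c < a := by omega
        have := nocross k (le_of_lt hkw) c a hca (by
          intro j hj
          have hjne : j ≠ jk := by
            intro hje
            rw [hje] at hj
            have hjkv : (jk : ℕ) = k := rfl
            omega
          have := hperm j jk hjne
          rw [Finset.pair_comm c a]
          exact this)
        rw [hπa, hπc] at this
        omega
      -- description of πp (k+1) and its inverse
      have hπ' : ∀ x : ℕ, πp (k+1) x =
          if πp k x = t then t+1 else if πp k x = t+1 then t else πp k x := by
        intro x
        rw [hstepπ k hkw, Equiv.Perm.mul_apply, Equiv.swap_apply_def]
      have hπ'inv : ∀ y : ℕ, (πp (k+1))⁻¹ y =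
          if y = t then c else if y = t+1 then a else (πp k)⁻¹ y := by
        intro y
        rw [hstepπ k hkw, mul_inv_rev, Equiv.Perm.mul_apply, Equiv.swap_inv,
          Equiv.swap_apply_def]
        have hbt : β ⟨k, hkw⟩ = t := rfl
        rw [hbt]
        split_ifs with h1 h2
        · rfl
        · rfl
        · rfl
      have hinj : ∀ x y : ℕ, πp k x = πp k y → x = y := fun x y h => (πp k).injective h
      constructor
      · -- part 1
        intro i hi1 hi2
        have hjb := hrange (k+1) i hi1 hi2
        rw [hstepB k hkw, entry1_mul_E _ t ht1 ht2 _ i _ hi1 hi2 hjb.1 hjb.2]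
        rw [hπ' i]
        by_cases hit : πp k i = t
        · rw [if_pos hit, if_neg (by omega), if_pos rfl, ← hit]
          exact ih1 i hi1 hi2
        · rw [if_neg hit]
          by_cases hit1 : πp k i = t + 1
          · rw [if_pos hit1, if_pos rfl]
            have hie : i = c := by
              apply hinj
              rw [hπc, hit1]
            have hz : entry1 (L.take k).prod i t = 0 := by
              apply ih2 i t hi1 hi2 ht1 (by omega)
              right
              rw [← ha, hie]
              exact hac
            have ho : entry1 (L.take k).prod i (t+1) = 1 := by
              rw [← hit1]; exact ih1 i hi1 hi2
            rw [hz, ho]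
            ring
          · simp only [if_neg hit, if_neg hit1]
            exact ih1 i hi1 hi2
      · -- part 2
        intro i j hi1 hi2 hj1 hj2 hlt
        have hπ'i := hπ' i
        have hπ'j := hπ'inv j
        rw [hstepB k hkw, entry1_mul_E _ t ht1 ht2 _ i j hi1 hi2 hj1 hj2]
        by_cases h1 : j = t
        · rw [if_pos h1]
          have hz2 : entry1 (L.take k).prod i (t+1) = 0 ∧
              entry1 (L.take k).prod i t = 0 := by
            rcases hlt with h | h
            · -- πp (k+1) i < j = t
              have hlt' : πp k i < t := by
                rw [hπ'i] at h
                split_ifs at h <;> omega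
              constructor
              · exact ih2 i (t+1) hi1 hi2 (by omega) (by omega) (Or.inl (by omega))
              · exact ih2 i t hi1 hi2 ht1 (by omega) (Or.inl hlt')
            · -- (πp (k+1))⁻¹ j < i, and (πp (k+1))⁻¹ t = c
              rw [hπ'j, h1, if_pos rfl] at h
              constructor
              · exact ih2 i (t+1) hi1 hi2 (by omega) (by omega) (Or.inr (by rw [← hc]; omega))
              · exact ih2 i t hi1 hi2 ht1 (by omega) (Or.inr (by rw [← ha]; omega))
          rw [hz2.1, hz2.2]
          ring
        · rw [if_neg h1]
          by_cases h2 : j = t + 1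
          · rw [if_pos h2]
            rcases hlt with h | h
            · rw [hπ'i] at h
              by_cases hit : πp k i = t
              · rw [if_pos hit] at h; omega
              · rw [if_neg hit] at h
                by_cases hit1 : πp k i = t + 1
                · -- i = c, use a < c
                  have hie : i = c := by
                    apply hinj
                    rw [hπc, hit1]
                  exact ih2 i t hi1 hi2 ht1 (by omega) (Or.inr (by rw [← ha, hie]; exact hac))
                · rw [if_neg hit1] at h
                  exact ih2 i t hi1 hi2 ht1 (by omega) (Or.inl (by omega))
            · rw [hπ'j, h2, if_neg (by omega), if_pos rfl] at h
              exact ih2 i t hi1 hi2 ht1 (by omega) (Or.inr (by rw [← ha]; omega))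
          · rw [if_neg h2]
            rcases hlt with h | h
            · rw [hπ'i] at h
              apply ih2 i j hi1 hi2 hj1 hj2
              left
              split_ifs at h <;> omega
            · rw [hπ'j, if_neg h1, if_neg h2] at h
              exact ih2 i j hi1 hi2 hj1 hj2 (Or.inr h)
  -- conclude
  have hLlen : L.length = w := by rw [hL, List.length_ofFn]
  have htk : L.take w = L := by rw [← hLlen, List.take_length]
  have hfull : (L.take w).prod = pathMatrix q R β b := by
    rw [htk]
    rfl
  obtain ⟨p1, p2⟩ := inv w le_rfl
  rw [hfull] at p1 p2
  exact ⟨p1, p2⟩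
end

section
/- Let R be a commutative ring, q ≥ 3 and 1 ≤ i ≤ q−2. Then for all x, y, z ∈ R: E_{i+1}(x) · E_i(y) · E_{i+1}(z) = E_i(z) · E_{i+1}(y − zx) · E_i(x). (This is the effect of the braid relation σ_i σ_{i+1} σ_i = σ_{i+1} σ_i σ_{i+1}, i.e. of a Reidemeister III move, on the path matrix: over a ring of characteristic 2 the middle label changes from y to y + zx.) -/
lemma Emul (q : ℕ) (R : Type*) [CommRing R] (i : ℕ) (h1 : 1 ≤ i) (h2 : i + 1 ≤ q)
    (b : R) (M : Matrix (Fin q) (Fin q) R) :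
    Ematrix q R i b * M = Matrix.of fun (r s : Fin q) =>
      if (r : ℕ) + 1 = i then b * M r s + M ⟨i, by omega⟩ s
      else if (r : ℕ) + 1 = i + 1 then M ⟨i - 1, by omega⟩ s
      else M r s := by
  ext r s
  rw [Matrix.mul_apply, Matrix.of_apply]
  by_cases hr : (r : ℕ) + 1 = i
  · rw [if_pos hr]
    have hne : r ≠ (⟨i, by omega⟩ : Fin q) := by simp [Fin.ext_iff]; omega
    rw [Fintype.sum_eq_add r ⟨i, by omega⟩ hne]
    · simp only [Ematrix, Matrix.of_apply, Fin.ext_iff]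
      split_ifs <;> first | ring1 | (exfalso; ((try simp only [and_true, true_and, not_true] at *); omega))
    · intro c hc
      obtain ⟨hc1, hc2⟩ := hc
      simp only [ne_eq, Fin.ext_iff] at hc1 hc2
      simp only [Ematrix, Matrix.of_apply, Fin.ext_iff]
      split_ifs <;> first | ring1 | (exfalso; ((try simp only [and_true, true_and, not_true] at *); omega))
  · by_cases hr' : (r : ℕ) + 1 = i + 1
    · rw [if_neg hr, if_pos hr']
      rw [Fintype.sum_eq_single (⟨i - 1, by omega⟩ : Fin q)]
      · simp only [Ematrix, Matrix.of_apply, Fin.ext_iff]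
        split_ifs <;> first | ring1 | (exfalso; ((try simp only [and_true, true_and, not_true] at *); omega))
      · intro c hc
        simp only [ne_eq, Fin.ext_iff] at hc
        simp only [Ematrix, Matrix.of_apply, Fin.ext_iff]
        split_ifs <;> first | ring1 | (exfalso; ((try simp only [and_true, true_and, not_true] at *); omega))
    · rw [if_neg hr, if_neg hr']
      rw [Fintype.sum_eq_single r]
      · simp only [Ematrix, Matrix.of_apply, Fin.ext_iff]
        split_ifs <;> first | ring1 | (exfalso; ((try simp only [and_true, true_and, not_true] at *); omega))
      · intro c hc
        simp only [ne_eq, Fin.ext_iff] at hc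
        simp only [Ematrix, Matrix.of_apply, Fin.ext_iff]
        split_ifs <;> first | ring1 | (exfalso; ((try simp only [and_true, true_and, not_true] at *); omega))


set_option maxHeartbeats 1000000 in
/-- the effect of the braid relation on the path matrix:
`E_{i+1}(x) · E_i(y) · E_{i+1}(z) = E_i(z) · E_{i+1}(y − zx) · E_i(x)`. -/
theorem Ematrix_braid_relation (q : ℕ) (hq : 3 ≤ q) (R : Type*) [CommRing R]
    (i : ℕ) (hi : 1 ≤ i) (hi' : i ≤ q - 2) (x y z : R) :
    Ematrix q R (i + 1) x * Ematrix q R i y * Ematrix q R (i + 1) z =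
      Ematrix q R i z * Ematrix q R (i + 1) (y - z * x) * Ematrix q R i x := by
  obtain ⟨j, rfl⟩ : ∃ j, i = j + 1 := ⟨i - 1, by omega⟩
  have h2 : j + 3 ≤ q := by omega
  rw [mul_assoc, mul_assoc,
    Emul q R (j + 1) (by omega) (by omega) y, Emul q R (j + 2) (by omega) (by omega) x,
    Emul q R (j + 2) (by omega) (by omega) (y - z * x), Emul q R (j + 1) (by omega) (by omega) z]
  ext r s
  rcases (show (r : ℕ) = j ∨ (r : ℕ) = j + 1 ∨ (r : ℕ) = j + 2 ∨
      ((r : ℕ) ≠ j ∧ (r : ℕ) ≠ j + 1 ∧ (r : ℕ) ≠ j + 2 ∧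
       j ≠ (r : ℕ) ∧ j + 1 ≠ (r : ℕ) ∧ j + 2 ≠ (r : ℕ)) by omega) with
    hr | hr | hr | ⟨hr1, hr2, hr3, hr4, hr5, hr6⟩ <;>
  rcases (show (s : ℕ) = j ∨ (s : ℕ) = j + 1 ∨ (s : ℕ) = j + 2 ∨
      ((s : ℕ) ≠ j ∧ (s : ℕ) ≠ j + 1 ∧ (s : ℕ) ≠ j + 2 ∧
       j ≠ (s : ℕ) ∧ j + 1 ≠ (s : ℕ) ∧ j + 2 ≠ (s : ℕ)) by omega) with
    hs | hs | hs | ⟨hs1, hs2, hs3, hs4, hs5, hs6⟩ <;>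
  simp +arith +decide [Ematrix, Matrix.of_apply, Fin.ext_iff, *] <;>
  ring1
end

section
/- For every integer p ≥ 1, the number of tuples (b_1, …, b_p) ∈ 𝔽₂^p such that the 2×2 matrix B = E_1(b_1) · E_1(b_2) ⋯ E_1(b_p) over 𝔽₂ satisfies B_{1,1} = 1 and det B = 1 equals (2^{p+1} + (−1)^p)/3. -/
def pr {p : ℕ} (b : Fin p → ZMod 2) : ZMod 2 × ZMod 2 :=
  (pathMatrix 2 (ZMod 2) (fun _ => 1) b 0 0, pathMatrix 2 (ZMod 2) (fun _ => 1) b 1 0)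

def cnt (p : ℕ) (c : ZMod 2 × ZMod 2) : ℕ :=
  (Finset.univ.filter fun b : Fin p → ZMod 2 => pr b = c).card

lemma pathMatrix_nil (b : Fin 0 → ZMod 2) :
    pathMatrix 2 (ZMod 2) (fun _ => 1) b = 1 := by
  simp [pathMatrix]

lemma pr_nil (b : Fin 0 → ZMod 2) : pr b = (1, 0) := by
  simp [pr, pathMatrix_nil, Matrix.one_apply]

lemma pathMatrix_cons {p : ℕ} (v : ZMod 2) (t : Fin p → ZMod 2) :
    pathMatrix 2 (ZMod 2) (fun _ => 1) (Fin.cons v t)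
      = Ematrix 2 (ZMod 2) 1 v * pathMatrix 2 (ZMod 2) (fun _ => 1) t := by
  unfold pathMatrix
  rw [List.ofFn_succ, List.prod_cons]
  simp

lemma E_apply (v : ZMod 2) :
    Ematrix 2 (ZMod 2) 1 v 0 0 = v ∧ Ematrix 2 (ZMod 2) 1 v 0 1 = 1 ∧
    Ematrix 2 (ZMod 2) 1 v 1 0 = 1 ∧ Ematrix 2 (ZMod 2) 1 v 1 1 = 0 := by
  refine ⟨rfl, rfl, rfl, rfl⟩

lemma pr_cons {p : ℕ} (v : ZMod 2) (t : Fin p → ZMod 2) :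
    pr (Fin.cons v t) = (v * (pr t).1 + (pr t).2, (pr t).1) := by
  obtain ⟨h1, h2, h3, h4⟩ := E_apply v
  simp only [pr, pathMatrix_cons, Matrix.mul_apply, Fin.sum_univ_two, h1, h2, h3, h4]
  simp

lemma sum_zmod2 {M : Type*} [AddCommMonoid M] (f : ZMod 2 → M) :
    ∑ v : ZMod 2, f v = f 0 + f 1 := by
  have h : (Finset.univ : Finset (ZMod 2)) = {0, 1} := by decide
  rw [h, Finset.sum_insert (by decide), Finset.sum_singleton]

lemma filter_card_cons {p : ℕ} (Q : (Fin (p + 1) → ZMod 2) → Prop) [DecidablePred Q] :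
    (Finset.univ.filter Q).card
      = (Finset.univ.filter fun t => Q (Fin.cons 0 t)).card
        + (Finset.univ.filter fun t => Q (Fin.cons 1 t)).card := by
  rw [Finset.card_filter, Finset.card_filter, Finset.card_filter]
  rw [← (Fin.consEquiv (fun _ : Fin (p+1) => ZMod 2)).sum_comp
    (fun b => if Q b then 1 else 0)]
  rw [Fintype.sum_prod_type]
  rw [sum_zmod2]
  rfl

lemma cnt_succ (p : ℕ) (x y : ZMod 2) :
    cnt (p + 1) (x, y) = cnt p (y, x) + cnt p (y, x + y) := by
  unfold cnt
  rw [filter_card_cons]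
  have key : ∀ v a c x y : ZMod 2,
      ((v * a + c, a) = (x, y)) ↔ ((a, c) = (y, x + v * y)) := by decide
  congr 1
  · apply congrArg
    apply Finset.filter_congr
    intro t _
    rw [pr_cons]
    simpa using key 0 (pr t).1 (pr t).2 x y
  · apply congrArg
    apply Finset.filter_congr
    intro t _
    rw [pr_cons]
    simpa using key 1 (pr t).1 (pr t).2 x y

lemma cnt_zero (c : ZMod 2 × ZMod 2) :
    cnt 0 c = if c = (1, 0) then 1 else 0 := by
  unfold cnt
  simp only [pr_nil]
  rcases eq_or_ne c (1, 0) with h | h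
  · simp [h, Finset.filter_const]
  · simp [Ne.symm h, Finset.filter_const, h]

lemma key (p : ℕ) :
    (cnt p (1, 0) : ℤ) * 3 = 2 ^ p + 2 * (-1) ^ p ∧
    (cnt p (0, 1) : ℤ) * 3 = 2 ^ p - (-1) ^ p ∧
    cnt p (1, 1) = cnt p (0, 1) := by
  induction p with
  | zero =>
    have a1 : cnt 0 (1, 0) = 1 := by rw [cnt_zero, if_pos rfl]
    have a2 : cnt 0 (0, 1) = 0 := by rw [cnt_zero, if_neg (by decide)]
    have a3 : cnt 0 (1, 1) = 0 := by rw [cnt_zero, if_neg (by decide)]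
    rw [a1, a2, a3]; norm_num
  | succ p ih =>
    obtain ⟨h1, h2, h3⟩ := ih
    have e10 : cnt (p+1) (1, 0) = cnt p (0, 1) + cnt p (0, 1) := by
      have := cnt_succ p 1 0; simpa using this
    have e01 : cnt (p+1) (0, 1) = cnt p (1, 0) + cnt p (1, 1) := by
      have := cnt_succ p 0 1; simpa using this
    have e11 : cnt (p+1) (1, 1) = cnt p (1, 1) + cnt p (1, 0) := by
      have := cnt_succ p 1 1
      have h20 : (1 : ZMod 2) + 1 = 0 := by decide
      rw [h20] at this
      simpa using this
    have hp2 : (2 : ℤ) ^ (p + 1) = 2 * 2 ^ p := by ring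
    have hm : (-1 : ℤ) ^ (p + 1) = -(-1) ^ p := by ring
    refine ⟨?_, ?_, ?_⟩
    · rw [e10]; push_cast; rw [hp2, hm]; linarith
    · rw [e01, h3]; push_cast; rw [hp2, hm]; linarith
    · rw [e11, e01, h3]; omega

lemma det_path {p : ℕ} (b : Fin p → ZMod 2) :
    (pathMatrix 2 (ZMod 2) (fun _ => 1) b).det = 1 := by
  induction p with
  | zero => rw [pathMatrix_nil]; simp
  | succ p ih =>
    rw [← Fin.cons_self_tail b, pathMatrix_cons, Matrix.det_mul, ih _]
    obtain ⟨h1, h2, h3, h4⟩ := E_apply (b 0)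
    rw [Matrix.det_fin_two, h1, h2, h3, h4]
    have : (b 0 * 0 - 1 * 1) * 1 = (-1 : ZMod 2) := by ring
    rw [this]; decide

/-- the number of augmentations of the `(p,2)` torus link, i.e. of tuples
`b ∈ 𝔽₂^p` with `B_{1,1} = 1` and `det B = 1` for `B = E₁(b₁)⋯E₁(b_p)`, equals
`(2^{p+1} + (−1)^p)/3`. -/
theorem count_augmentations_two_strands (p : ℕ) (hp : 1 ≤ p) :
    (Nat.card {b : Fin p → ZMod 2 //
        entry1 (pathMatrix 2 (ZMod 2) (fun _ => 1) b) 1 1 = 1 ∧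
        (pathMatrix 2 (ZMod 2) (fun _ => 1) b).det = 1} : ℤ) * 3 =
      2 ^ (p + 1) + (-1) ^ p := by
  have hent : ∀ b : Fin p → ZMod 2,
      entry1 (pathMatrix 2 (ZMod 2) (fun _ => 1) b) 1 1
        = pathMatrix 2 (ZMod 2) (fun _ => 1) b 0 0 := by
    intro b
    rw [entry1, dif_pos (by norm_num)]
    rfl
  have hiff : ∀ b : Fin p → ZMod 2,
      (entry1 (pathMatrix 2 (ZMod 2) (fun _ => 1) b) 1 1 = 1 ∧
        (pathMatrix 2 (ZMod 2) (fun _ => 1) b).det = 1)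
      ↔ (pr b = (1, 0) ∨ pr b = (1, 1)) := by
    intro b
    rw [hent b, and_iff_left (det_path b)]
    have : ∀ u w : ZMod 2, u = 1 ↔ ((u, w) = (1, 0) ∨ (u, w) = (1, 1)) := by decide
    exact this _ _
  have hcard : Nat.card {b : Fin p → ZMod 2 //
        entry1 (pathMatrix 2 (ZMod 2) (fun _ => 1) b) 1 1 = 1 ∧
        (pathMatrix 2 (ZMod 2) (fun _ => 1) b).det = 1}
      = cnt p (1, 0) + cnt p (1, 1) := by
    rw [Nat.card_congr (Equiv.subtypeEquivRight hiff)]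
    rw [Nat.card_eq_fintype_card, Fintype.card_subtype]
    unfold cnt
    rw [Finset.filter_or, Finset.card_union_of_disjoint]
    rw [Finset.disjoint_filter]
    rintro b - h1 h2
    rw [h1] at h2
    exact absurd (Prod.ext_iff.1 h2).2 (by decide)
  rw [hcard]
  obtain ⟨h1, h2, h3⟩ := key p
  push_cast
  rw [h3]
  have hp2 : (2 : ℤ) ^ (p + 1) = 2 * 2 ^ p := by ring
  rw [hp2]
  linarith
end

section
/- For every positive braid word β = (i_1, …, i_w) on q strands, the number of tuples b = (b_1, …, b_w) ∈ 𝔽₂^w such that for every 1 ≤ n ≤ q the determinant of the upper-left n×n submatrix of B_β(b_1, …, b_w) equals 1 is odd. -/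
section Aux
open Matrix Finset

variable {q : ℕ}

/-- The product of all leading principal minors. -/
def Dfun (q : ℕ) (M : Matrix (Fin q) (Fin q) (ZMod 2)) : ZMod 2 :=
  ∏ n ∈ Finset.Icc 1 q, (principalMinor M n).det

lemma principalMinor_apply (M : Matrix (Fin q) (Fin q) (ZMod 2)) {n : ℕ} (hn : n ≤ q)
    (i j : Fin n) :
    principalMinor M n i j = M ⟨i, by omega⟩ ⟨j, by omega⟩ := by
  have h : ((i : ℕ) + 1 - 1 < q ∧ (j : ℕ) + 1 - 1 < q) := by
    constructor <;> simp <;> omega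
  simp only [principalMinor, Matrix.of_apply, entry1, dif_pos h]
  congr 1 <;> exact Fin.ext (by simp)

lemma Dfun_one : Dfun q 1 = 1 := by
  refine Finset.prod_eq_one fun n hn => ?_
  have hn' : n ≤ q := (Finset.mem_Icc.mp hn).2
  have : principalMinor (1 : Matrix (Fin q) (Fin q) (ZMod 2)) n = 1 := by
    ext r s
    rw [principalMinor_apply _ hn']
    simp [Matrix.one_apply, Fin.ext_iff]
  rw [this, Matrix.det_one]

lemma mulE_apply (M : Matrix (Fin q) (Fin q) (ZMod 2)) (i : ℕ) (b : ZMod 2)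
    (hi1 : 1 ≤ i) (hiq : i + 1 ≤ q) (r s : Fin q) :
    (M * Ematrix q (ZMod 2) i b) r s =
      if (s : ℕ) + 1 = i then b * M r ⟨i - 1, by omega⟩ + M r ⟨i, by omega⟩
      else if (s : ℕ) + 1 = i + 1 then M r ⟨i - 1, by omega⟩
      else M r s := by
  rw [Matrix.mul_apply]
  split_ifs with h1 h2
  · have hcol : ∀ t : Fin q, Ematrix q (ZMod 2) i b t s =
        (if t = (⟨i - 1, by omega⟩ : Fin q) then b else 0) +
        (if t = (⟨i, by omega⟩ : Fin q) then 1 else 0) := by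
      intro t
      simp only [Ematrix, Matrix.of_apply, Fin.ext_iff, Fin.val_mk]
      split_ifs <;> first | ring1 | (exfalso; omega)
    simp only [hcol, mul_add, Finset.sum_add_distrib, mul_ite, mul_zero, mul_one,
      Finset.sum_ite_eq', Finset.mem_univ, if_true]
    ring
  · have hcol : ∀ t : Fin q, Ematrix q (ZMod 2) i b t s =
        (if t = (⟨i - 1, by omega⟩ : Fin q) then 1 else 0) := by
      intro t
      simp only [Ematrix, Matrix.of_apply, Fin.ext_iff, Fin.val_mk]
      split_ifs <;> first | ring1 | (exfalso; omega)
    simp [hcol, mul_ite, Finset.sum_ite_eq']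
  · have hcol : ∀ t : Fin q, Ematrix q (ZMod 2) i b t s =
        (if t = s then 1 else 0) := by
      intro t
      simp only [Ematrix, Matrix.of_apply, Fin.ext_iff, Fin.val_mk]
      split_ifs <;> first | ring1 | (exfalso; omega)
    simp [hcol, mul_ite, Finset.sum_ite_eq']

end Aux

section Aux2
open Matrix Finset

variable {q : ℕ}

lemma minor_mulE_lt (M : Matrix (Fin q) (Fin q) (ZMod 2)) (i : ℕ) (b : ZMod 2)
    (hi1 : 1 ≤ i) (hiq : i + 1 ≤ q) {n : ℕ} (hn : n < i) :
    principalMinor (M * Ematrix q (ZMod 2) i b) n = principalMinor M n := by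
  have hnq : n ≤ q := by omega
  ext r s
  rw [principalMinor_apply _ hnq, principalMinor_apply _ hnq,
    mulE_apply M i b hi1 hiq]
  rw [if_neg (by simp; omega), if_neg (by simp; omega)]

lemma minor_mulE_eq (M : Matrix (Fin q) (Fin q) (ZMod 2)) (i : ℕ) (b : ZMod 2)
    (hi1 : 1 ≤ i) (hiq : i + 1 ≤ q) :
    principalMinor (M * Ematrix q (ZMod 2) i b) i =
      (principalMinor M i).updateCol ⟨i - 1, by omega⟩
        (fun r => b * M ⟨r, by omega⟩ ⟨i - 1, by omega⟩ + M ⟨r, by omega⟩ ⟨i, by omega⟩) := by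
  have hnq : i ≤ q := by omega
  ext r s
  rw [principalMinor_apply _ hnq, mulE_apply M i b hi1 hiq,
    Matrix.updateCol_apply]
  by_cases hs : (s : ℕ) + 1 = i
  · rw [if_pos (by simpa using hs), if_pos (by simp [Fin.ext_iff]; omega)]
  · rw [if_neg (by simpa using hs), if_neg (by simp; omega),
      if_neg (by simp [Fin.ext_iff]; omega), principalMinor_apply _ hnq]

lemma minor_mulE_gt (M : Matrix (Fin q) (Fin q) (ZMod 2)) (i : ℕ) (b : ZMod 2)
    (hi1 : 1 ≤ i) (hiq : i + 1 ≤ q) {n : ℕ} (hn1 : i < n) (hnq : n ≤ q) :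
    principalMinor (M * Ematrix q (ZMod 2) i b) n =
      (((principalMinor M n).updateCol ⟨i, by omega⟩
          (fun r => principalMinor M n r ⟨i - 1, by omega⟩)).updateCol ⟨i - 1, by omega⟩
        (fun r => b * principalMinor M n r ⟨i - 1, by omega⟩ +
          principalMinor M n r ⟨i, by omega⟩)) := by
  ext r s
  rw [principalMinor_apply _ hnq, mulE_apply M i b hi1 hiq,
    Matrix.updateCol_apply, Matrix.updateCol_apply]
  by_cases hs : (s : ℕ) + 1 = i
  · rw [if_pos (by simpa using hs), if_pos (by simp [Fin.ext_iff]; omega)]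
    rw [principalMinor_apply _ hnq, principalMinor_apply _ hnq]
  · by_cases hs' : (s : ℕ) + 1 = i + 1
    · rw [if_neg (by simpa using hs), if_pos (by simpa using hs'),
        if_neg (by simp [Fin.ext_iff]; omega), if_pos (by simp [Fin.ext_iff]; omega),
        principalMinor_apply _ hnq]
    · rw [if_neg (by simpa using hs), if_neg (by simpa using hs'),
        if_neg (by simp [Fin.ext_iff]; omega), if_neg (by simp [Fin.ext_iff]; omega),
        principalMinor_apply _ hnq]

lemma det_minor_mulE_gt (M : Matrix (Fin q) (Fin q) (ZMod 2)) (i : ℕ) (b : ZMod 2)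
    (hi1 : 1 ≤ i) (hiq : i + 1 ≤ q) {n : ℕ} (hn1 : i < n) (hnq : n ≤ q) :
    (principalMinor (M * Ematrix q (ZMod 2) i b) n).det = (principalMinor M n).det := by
  rw [minor_mulE_gt M i b hi1 hiq hn1 hnq]
  set P := principalMinor M n with hP
  set j1 : Fin n := ⟨i - 1, by omega⟩ with hj1
  set j2 : Fin n := ⟨i, by omega⟩ with hj2
  have hne : j1 ≠ j2 := by simp [hj1, hj2, Fin.ext_iff]; omega
  have hcol : (fun r => b * P r j1 + P r j2) =
      (b • fun r => P r j1) + fun r => P r j2 := by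
    funext r; simp [Pi.add_apply, Pi.smul_apply, smul_eq_mul]
  rw [hcol, Matrix.det_updateCol_add, Matrix.det_updateCol_smul]
  have h0 : ((P.updateCol j2 fun r => P r j1).updateCol j1 fun r => P r j1).det = 0 := by
    apply Matrix.det_zero_of_column_eq hne
    intro k
    simp [Matrix.updateCol_apply, hne, hne.symm]
  have hswap : ((P.updateCol j2 fun r => P r j1).updateCol j1 fun r => P r j2)
      = P.submatrix id (Equiv.swap j1 j2) := by
    ext r s
    rcases eq_or_ne s j1 with rfl | h1
    · simp [Matrix.updateCol_apply, Equiv.swap_apply_left]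
    · rcases eq_or_ne s j2 with rfl | h2
      · simp [Matrix.updateCol_apply, hne.symm, Equiv.swap_apply_right]
      · simp [Matrix.updateCol_apply, h1, h2, Equiv.swap_apply_of_ne_of_ne h1 h2]
  rw [h0, hswap, Matrix.det_permute' (Equiv.swap j1 j2) P, Equiv.Perm.sign_swap hne]
  simp [CharTwo.neg_eq]

end Aux2

section Aux3
open Matrix Finset

variable {q : ℕ}

lemma D_mulE (M : Matrix (Fin q) (Fin q) (ZMod 2)) (i : ℕ)
    (hi1 : 1 ≤ i) (hiq : i + 1 ≤ q) (b : ZMod 2) :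
    Dfun q (M * Ematrix q (ZMod 2) i b) =
      (b * (principalMinor M i).det +
        ((principalMinor M i).updateCol ⟨i - 1, by omega⟩
          (fun r => M ⟨r, by omega⟩ ⟨i, by omega⟩)).det) *
      ∏ n ∈ (Finset.Icc 1 q).erase i, (principalMinor M n).det := by
  have hiI : i ∈ Finset.Icc 1 q := by simp; omega
  rw [Dfun, ← Finset.mul_prod_erase _ _ hiI]
  congr 1
  · rw [minor_mulE_eq M i b hi1 hiq]
    have hcol : (fun r : Fin i => b * M ⟨r, by omega⟩ ⟨i - 1, by omega⟩ + M ⟨r, by omega⟩ ⟨i, by omega⟩) =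
        (b • fun r : Fin i => principalMinor M i r ⟨i - 1, by omega⟩) +
          fun r : Fin i => M ⟨r, by omega⟩ ⟨i, by omega⟩ := by
      funext r
      simp [principalMinor_apply M (show i ≤ q by omega)]
    rw [hcol, Matrix.det_updateCol_add, Matrix.det_updateCol_smul]
    rw [Matrix.updateCol_eq_self]
  · refine Finset.prod_congr rfl fun n hn => ?_
    rcases Finset.mem_erase.mp hn with ⟨hne, hmem⟩
    rcases Finset.mem_Icc.mp hmem with ⟨h1n, hnq⟩
    rcases lt_or_gt_of_ne hne with h | h
    · rw [minor_mulE_lt M i b hi1 hiq h]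
    · exact det_minor_mulE_gt M i b hi1 hiq h hnq

lemma sum_D_mulE (M : Matrix (Fin q) (Fin q) (ZMod 2)) (i : ℕ)
    (hi1 : 1 ≤ i) (hiq : i + 1 ≤ q) :
    ∑ x : ZMod 2, Dfun q (M * Ematrix q (ZMod 2) i x) = Dfun q M := by
  have huniv : (Finset.univ : Finset (ZMod 2)) = {0, 1} := by decide
  rw [huniv, Finset.sum_insert (by decide), Finset.sum_singleton,
    D_mulE M i hi1 hiq 0, D_mulE M i hi1 hiq 1]
  have hiI : i ∈ Finset.Icc 1 q := by simp; omega
  rw [Dfun, ← Finset.mul_prod_erase _ _ hiI]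
  have h2 : (2 : ZMod 2) = 0 := by decide
  set d := (principalMinor M i).det
  set d' := ((principalMinor M i).updateCol (⟨i - 1, by omega⟩ : Fin i)
      (fun r => M ⟨r, by omega⟩ ⟨i, by omega⟩)).det
  set C := ∏ n ∈ (Finset.Icc 1 q).erase i, (principalMinor M n).det
  linear_combination (d' * C) * h2

lemma sum_D_mul_path (M : Matrix (Fin q) (Fin q) (ZMod 2)) {w : ℕ}
    (β : Fin w → ℕ) (hβ : IsBraidWord q β) :
    ∑ b : Fin w → ZMod 2, Dfun q (M * pathMatrix q (ZMod 2) β b) = Dfun q M := by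
  induction w generalizing M with
  | zero =>
      rw [Fintype.sum_unique]
      simp [pathMatrix]
  | succ w ih =>
      rw [← (Fin.consEquiv (fun _ : Fin (w + 1) => ZMod 2)).sum_comp]
      rw [Fintype.sum_prod_type]
      have hstep : ∀ (x : ZMod 2) (g : Fin w → ZMod 2),
          pathMatrix q (ZMod 2) β ((Fin.consEquiv (fun _ : Fin (w + 1) => ZMod 2)) (x, g)) =
            Ematrix q (ZMod 2) (β 0) x *
              pathMatrix q (ZMod 2) (β ∘ Fin.succ) g := by
        intro x g
        simp [pathMatrix, List.ofFn_succ, Fin.consEquiv, Fin.cons_zero, Fin.cons_succ,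
          Function.comp]
      calc ∑ x : ZMod 2, ∑ g : Fin w → ZMod 2,
              Dfun q (M * pathMatrix q (ZMod 2) β ((Fin.consEquiv (fun _ : Fin (w + 1) => ZMod 2)) (x, g)))
          = ∑ x : ZMod 2, Dfun q (M * Ematrix q (ZMod 2) (β 0) x) := by
            refine Finset.sum_congr rfl fun x _ => ?_
            rw [← ih (M * Ematrix q (ZMod 2) (β 0) x) (β ∘ Fin.succ) (fun k => hβ k.succ)]
            refine Finset.sum_congr rfl fun g _ => ?_
            rw [hstep, mul_assoc]
        _ = Dfun q M := sum_D_mulE M (β 0) (hβ 0).1 (hβ 0).2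

end Aux3

/-- the number of augmentations of `γ_β`, i.e. of tuples `b ∈ 𝔽₂^w`
for which all leading principal minors of the path matrix equal `1`, is odd. -/
theorem odd_card_augmentations (q : ℕ) (hq : 1 ≤ q) {w : ℕ}
    (β : Fin w → ℕ) (hβ : IsBraidWord q β) :
    Odd (Nat.card {b : Fin w → ZMod 2 //
      ∀ n : ℕ, 1 ≤ n → n ≤ q →
        (principalMinor (pathMatrix q (ZMod 2) β b) n).det = 1}) := by
  classical
  have hsum : ∑ b : Fin w → ZMod 2, Dfun q (pathMatrix q (ZMod 2) β b) = 1 := by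
    have h := sum_D_mul_path (1 : Matrix (Fin q) (Fin q) (ZMod 2)) β hβ
    simpa [Dfun_one] using h
  set P : (Fin w → ZMod 2) → Prop := fun b =>
    ∀ n : ℕ, 1 ≤ n → n ≤ q → (principalMinor (pathMatrix q (ZMod 2) β b) n).det = 1 with hPdef
  have hcard : Nat.card {b : Fin w → ZMod 2 // P b} = (Finset.univ.filter P).card := by
    rw [Nat.card_eq_fintype_card, Fintype.card_subtype]
  have hind : ∀ b : Fin w → ZMod 2,
      (if P b then (1 : ZMod 2) else 0) = Dfun q (pathMatrix q (ZMod 2) β b) := by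
    intro b
    by_cases hb : P b
    · rw [if_pos hb]
      exact (Finset.prod_eq_one fun n hn => by
        rcases Finset.mem_Icc.mp hn with ⟨h1, h2⟩
        exact hb n h1 h2).symm
    · rw [if_neg hb]
      rw [hPdef] at hb
      simp only at hb
      push_neg at hb
      obtain ⟨n, h1, h2, h3⟩ := hb
      have h0 : (principalMinor (pathMatrix q (ZMod 2) β b) n).det = 0 := by
        revert h3
        generalize (principalMinor (pathMatrix q (ZMod 2) β b) n).det = x
        revert x; decide
      exact (Finset.prod_eq_zero (Finset.mem_Icc.mpr ⟨h1, h2⟩) h0).symm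
  have hcast : (((Finset.univ.filter P).card : ℕ) : ZMod 2) = 1 := by
    calc (((Finset.univ.filter P).card : ℕ) : ZMod 2)
        = ∑ _b ∈ Finset.univ.filter P, (1 : ZMod 2) := by
          rw [Finset.sum_const, nsmul_eq_mul, mul_one]
      _ = ∑ b : Fin w → ZMod 2, (if P b then (1 : ZMod 2) else 0) :=
          Finset.sum_filter _ _
      _ = ∑ b : Fin w → ZMod 2, Dfun q (pathMatrix q (ZMod 2) β b) :=
          Finset.sum_congr rfl fun b _ => hind b
      _ = 1 := hsum
  rw [hcard, Nat.odd_iff]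
  by_contra hodd
  have he : (Finset.univ.filter P).card % 2 = 0 := by omega
  obtain ⟨k, hk⟩ := (Nat.even_iff.mpr he)
  rw [hk] at hcast
  push_cast at hcast
  have h2 : (k : ZMod 2) + k = 0 := by
    have h22 : (2 : ZMod 2) = 0 := by decide
    linear_combination (k : ZMod 2) * h22
  rw [h2] at hcast
  exact absurd hcast (by decide)
end
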